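/- Let 0 < q < 1, w ≥ 1, and for i = 1,…,w let n_i ∈ ℕ with n_i ≥ 2 and x_i ∈ [0,1]. Then Σ_{k₁=2}^{n₁} Σ_{k₂=2}^{n₂} ⋯ Σ_{k_w=2}^{n_w} ∏_{i=1}^{w} ( C(k_i,2)/C(n_i,2) ) · B_{k₁,…,k_w; n₁,…,n_w}(x₁,…,x_w; q) = ∏_{i=1}^{w} [x_i]_q^2 · ( [x_i]_q + [1−x_i]_q )^{n_i−2}. -/

import Mathlib

open Finset

/-- The `q`-number `[x]_q = (1 - q^x)/(1 - q)` (real exponent). -/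
noncomputable def qnum (q x : ℝ) : ℝ := (1 - q ^ x) / (1 - q)

/-- The modified `q`-Bernstein polynomial
`B_{k,n}(x;q) = C(n,k) [x]_q^k [1-x]_q^(n-k)`. -/
noncomputable def qBern (q : ℝ) (k n : ℕ) (x : ℝ) : ℝ :=
  (n.choose k : ℝ) * qnum q x ^ k * qnum q (1 - x) ^ (n - k)

lemma qBern_key (a b : ℝ) (n : ℕ) (hn : 2 ≤ n) :
    ∑ k ∈ Finset.Icc 2 n, ((k.choose 2 : ℝ) / (n.choose 2 : ℝ)) *
      ((n.choose k : ℝ) * a ^ k * b ^ (n - k)) = a ^ 2 * (a + b) ^ (n - 2) := by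
  have hc : (0 : ℝ) < (n.choose 2 : ℝ) := by
    exact_mod_cast Nat.choose_pos hn
  have h1 : Finset.Icc 2 n = Finset.Ico 2 (n + 1) := by
    rw [Finset.Ico_add_one_right_eq_Icc]
  rw [h1, Finset.sum_Ico_eq_sum_range]
  have h2 : n + 1 - 2 = n - 2 + 1 := by omega
  rw [h2]
  have key : ∀ j ∈ Finset.range (n - 2 + 1),
      (((2 + j).choose 2 : ℝ) / (n.choose 2 : ℝ)) *
        ((n.choose (2 + j) : ℝ) * a ^ (2 + j) * b ^ (n - (2 + j))) =
      a ^ 2 * (a ^ j * b ^ (n - 2 - j) * ((n - 2).choose j : ℝ)) := by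
    intro j hj
    have hjn : j ≤ n - 2 := by
      simpa using Nat.lt_succ_iff.mp (Finset.mem_range.mp hj)
    have hkn : 2 + j ≤ n := by omega
    have hchoose : (n.choose (2 + j) : ℕ) * (2 + j).choose 2 =
        n.choose 2 * (n - 2).choose j := by
      have := Nat.choose_mul (n := n) (by omega : 2 ≤ 2 + j)
      simpa using this
    have hchooseR : ((n.choose (2 + j) : ℝ)) * ((2 + j).choose 2 : ℝ) =
        (n.choose 2 : ℝ) * ((n - 2).choose j : ℝ) := by exact_mod_cast hchoose
    have hpow : a ^ (2 + j) = a ^ 2 * a ^ j := pow_add a 2 j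
    have hsub : n - (2 + j) = n - 2 - j := by omega
    rw [hpow, hsub]
    field_simp
    linear_combination (a ^ 2 * a ^ j * b ^ (n - 2 - j)) * hchooseR
  rw [Finset.sum_congr rfl key, ← Finset.mul_sum, ← add_pow]

/-- Second degree evaluation formula for the modified `q`-Bernstein polynomials
of several variables. -/
theorem modified_qBernstein_second_moment
    (q : ℝ) (hq0 : 0 < q) (hq1 : q < 1)
    (w : ℕ) (hw : 1 ≤ w) (n : Fin w → ℕ) (hn : ∀ i, 2 ≤ n i)
    (x : Fin w → ℝ) (hx : ∀ i, x i ∈ Set.Icc (0 : ℝ) 1) :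
    ∑ k ∈ Finset.Icc (fun _ => 2 : Fin w → ℕ) n,
        ∏ i, (((k i).choose 2 : ℝ) / ((n i).choose 2 : ℝ)) *
          qBern q (k i) (n i) (x i) =
      ∏ i, qnum q (x i) ^ 2 * (qnum q (x i) + qnum q (1 - x i)) ^ (n i - 2) := by
  rw [Pi.Icc_eq,
    ← Finset.prod_univ_sum (fun i => Finset.Icc 2 (n i))
      (fun i k => ((k.choose 2 : ℝ) / ((n i).choose 2 : ℝ)) * qBern q k (n i) (x i))]
  refine Finset.prod_congr rfl fun i _ => ?_
  simpa [qBern, mul_assoc] using qBern_key (qnum q (x i)) (qnum q (1 - x i)) (n i) (hn i)
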